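/- Let ℓ_n denote the orthonormal Laguerre polynomials on (0,∞) with weight e^{-t}. Then for 1 ≤ k ≤ n, d^k/dt^k ℓ_n(t) = (-1)^{n-k} Σ_{ν=0}^{n-k} (-1)^ν C(n-ν-1, k-1) ℓ_ν(t). -/

import Mathlib

open MeasureTheory

open Finset fwdDiff

lemma intS (n r : ℕ) :
    ∑ i ∈ Finset.range (n+1), (-1:ℤ)^i * (n.choose i) * ((r+i).choose r)
      = (-1)^n * (r.choose n) := by
  have h := fwdDiff_iter_eq_sum_shift (1:ℕ) (fun x => (x.choose r : ℤ)) n r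
  have hval : (Δ_[(1:ℕ)])^[n] (fun x => (x.choose r : ℤ)) r = (r.choose n : ℤ) := by
    rcases le_or_gt n r with hnr | hrn
    · obtain ⟨j, rfl⟩ := Nat.exists_eq_add_of_le hnr
      rw [fwdDiff_iter_choose]
      have : (n + j).choose j = (n+j).choose n := by
        rw [← Nat.choose_symm (by omega : n ≤ n + j)]
        congr 1
        omega
      simp [this]
    · obtain ⟨s, rfl⟩ := Nat.exists_eq_add_of_lt hrn
      have hn : r + s + 1 = (s+1) + r := by omega
      rw [hn, Function.iterate_add_apply]
      have h0 : (Δ_[(1:ℕ)])^[r] (fun x => (x.choose r : ℤ)) = fun _ => (1:ℤ) := by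
        have := fwdDiff_iter_choose 0 r
        simp only [add_zero] at this
        rw [this]
        simp
      rw [h0, Function.iterate_succ_apply]
      have h1 : Δ_[(1:ℕ)] (fun _ : ℕ => (1:ℤ)) = fun _ => (0:ℤ) := fwdDiff_const _ _
      rw [h1, Function.iterate_fixed (fwdDiff_const (1:ℕ) (0:ℤ))]
      rw [Nat.choose_eq_zero_of_lt (by omega : r < s + 1 + r)]; simp
  rw [hval] at h
  have hc : ∀ i ∈ Finset.range (n+1), (-1:ℤ)^i * (n.choose i) * ((r+i).choose r)
      = (-1:ℤ)^n * (((-1:ℤ)^(n-i) * (n.choose i)) • ((r + i • 1).choose r : ℤ)) := by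
    intro i hi
    simp only [Finset.mem_range] at hi
    have hsign : (-1:ℤ)^n * (-1:ℤ)^(n-i) = (-1:ℤ)^i := by
      rw [← pow_add]
      have h2 : n + (n - i) = 2*(n-i) + i := by omega
      rw [h2, pow_add, pow_mul]
      simp
    rw [smul_eq_mul, smul_eq_mul, mul_one, ← hsign]
    ring
  rw [Finset.sum_congr rfl hc, ← Finset.mul_sum, ← h]

lemma vanderAux (p : ℕ) : ∀ q m : ℕ,
    ∑ a ∈ Finset.range (m+1), (a+p).choose p * ((m-a)+q).choose q
      = (m+p+q+1).choose (p+q+1) := by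
  intro q
  induction q with
  | zero =>
    intro m
    simp only [Nat.choose_zero_right, mul_one, Nat.add_zero]
    exact Nat.sum_range_add_choose m p
  | succ q ihq =>
    intro m
    induction m with
    | zero => simp
    | succ m ihm =>
      rw [Finset.sum_range_succ]
      have hsplit : ∀ a ∈ Finset.range (m+1),
          (a+p).choose p * ((m+1-a)+(q+1)).choose (q+1)
            = (a+p).choose p * ((m-a)+(q+1)).choose (q+1)
              + (a+p).choose p * ((m-a)+(q+1)).choose q := by
        intro a ha
        simp only [Finset.mem_range] at ha
        have e : (m+1-a)+(q+1) = ((m-a)+(q+1)) + 1 := by omega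
        rw [e, Nat.choose_succ_succ' ((m-a)+(q+1)) q, mul_add]
        omega
      rw [Finset.sum_congr rfl hsplit, Finset.sum_add_distrib]
      rw [ihm]
      have h3 : ∑ a ∈ Finset.range (m+1), (a+p).choose p * ((m-a)+(q+1)).choose q
            + (m+1+p).choose p
          = (m+1+p+q+1).choose (p+q+1) := by
        have := ihq (m+1)
        rw [Finset.sum_range_succ] at this
        rw [Finset.sum_congr rfl (fun a ha => ?_)] at this
        · simpa using this
        · simp only [Finset.mem_range] at ha
          have e : (m+1-a)+q = (m-a)+(q+1) := by omega
          rw [e]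
      have h4 : (m+1-(m+1))+(q+1) = q+1 := by omega
      rw [h4, Nat.choose_self, mul_one]
      have h5 : (m+1+p+(q+1)+1).choose (p+(q+1)+1)
          = (m+p+(q+1)+1).choose (p+(q+1)+1) + (m+1+p+q+1).choose (p+q+1) := by
        have e1 : m+1+p+(q+1)+1 = (m+p+(q+1)+1) + 1 := by ring
        have e2 : p+(q+1)+1 = (p+q+1) + 1 := by ring
        have e3 : m+1+p+q+1 = m+p+(q+1)+1 := by ring
        rw [e1, e2, e3, Nat.choose_succ_succ' (m+p+(q+1)+1) (p+q+1)]
        exact add_comm _ _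
      rw [h5, add_assoc, h3]

lemma vander (n k j : ℕ) (hk1 : 1 ≤ k) (hkn : k ≤ n) :
    ∑ ν ∈ Finset.range (n-k+1), (ν.choose j) * ((n-ν-1).choose (k-1))
      = n.choose (j+k) := by
  rcases le_or_gt j (n-k) with hj | hj
  · have hsub : Finset.Ico j (n-k+1) ⊆ Finset.range (n-k+1) := by
      rw [Finset.range_eq_Ico]
      exact Finset.Ico_subset_Ico (Nat.zero_le _) le_rfl
    rw [← Finset.sum_subset hsub (by
      intro x hx hx'
      simp only [Finset.mem_range] at hx
      simp only [Finset.mem_Ico] at hx'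
      have : x < j := by omega
      rw [Nat.choose_eq_zero_of_lt this, zero_mul])]
    rw [Finset.sum_Ico_eq_sum_range]
    have hm : n-k+1-j = (n-k-j)+1 := by omega
    rw [hm]
    have hterm : ∀ a ∈ Finset.range ((n-k-j)+1),
        ((j+a).choose j) * ((n-(j+a)-1).choose (k-1))
          = (a+j).choose j * (((n-k-j)-a)+(k-1)).choose (k-1) := by
      intro a ha
      simp only [Finset.mem_range] at ha
      have e1 : j+a = a+j := by ring
      have e2 : n-(j+a)-1 = ((n-k-j)-a)+(k-1) := by omega
      rw [e2, e1]
    rw [Finset.sum_congr rfl hterm, vanderAux j (k-1) (n-k-j)]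
    congr 1 <;> omega
  · have hz : ∀ ν ∈ Finset.range (n-k+1),
        (ν.choose j) * ((n-ν-1).choose (k-1)) = 0 := by
      intro ν hν
      simp only [Finset.mem_range] at hν
      rw [Nat.choose_eq_zero_of_lt (by omega : ν < j), zero_mul]
    rw [Finset.sum_congr rfl hz, Finset.sum_const_zero,
      Nat.choose_eq_zero_of_lt (by omega : n < j + k)]
open Finset Polynomial

noncomputable def pL (n : ℕ) : Polynomial ℝ :=
  ∑ i ∈ Finset.range (n+1), Polynomial.C ((-1:ℝ)^(n+i) * (n.choose i) / i.factorial) * Polynomial.X ^ i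

lemma pL_coeff (n m : ℕ) :
    (pL n).coeff m = if m ≤ n then (-1:ℝ)^(n+m) * (n.choose m) / m.factorial else 0 := by
  rw [pL, Polynomial.finset_sum_coeff]
  simp only [Polynomial.coeff_C_mul, Polynomial.coeff_X_pow]
  rw [Finset.sum_eq_single m (fun b _ hb => by simp [Ne.symm hb]) (fun hm => by
    simp only [Finset.mem_range, not_lt] at hm
    simp [Nat.choose_eq_zero_of_lt (show n < m by omega)])]
  rw [if_pos rfl, mul_one]
  split_ifs with h
  · rfl
  · simp [Nat.choose_eq_zero_of_lt (show n < m by omega)]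

lemma pL_coeff_self (n : ℕ) : (pL n).coeff n = 1 / n.factorial := by
  rw [pL_coeff, if_pos le_rfl, ← two_mul, pow_mul]
  simp

lemma pL_natDegree (n : ℕ) : (pL n).natDegree = n := by
  have h1 : (pL n).natDegree ≤ n := by
    apply Polynomial.natDegree_le_iff_coeff_eq_zero.2
    intro m hm
    rw [pL_coeff, if_neg (by omega)]
  have h2 : n ≤ (pL n).natDegree := by
    apply Polynomial.le_natDegree_of_ne_zero
    rw [pL_coeff_self]
    positivity
  omega

lemma pL_leadingCoeff (n : ℕ) : (pL n).leadingCoeff = 1 / n.factorial := by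
  rw [Polynomial.leadingCoeff, pL_natDegree, pL_coeff_self]

lemma pL_derivative (n k : ℕ) (hk1 : 1 ≤ k) (hkn : k ≤ n) :
    (Polynomial.derivative^[k]) (pL n) =
      ∑ ν ∈ Finset.range (n - k + 1),
        ((-1 : ℝ) ^ (n - k) * (-1 : ℝ) ^ ν * (Nat.choose (n - ν - 1) (k - 1) : ℝ)) • pL ν := by
  ext j
  rw [Polynomial.coeff_iterate_derivative, Polynomial.finset_sum_coeff]
  simp only [Polynomial.coeff_smul, smul_eq_mul, pL_coeff]
  rcases le_or_gt j (n-k) with hj | hj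
  · -- main case
    rw [if_pos (by omega : j + k ≤ n)]
    have hRHS : ∑ ν ∈ Finset.range (n-k+1),
        (-1:ℝ)^(n-k) * (-1)^ν * ((n-ν-1).choose (k-1)) *
          (if j ≤ ν then (-1:ℝ)^(ν+j) * (ν.choose j) / j.factorial else 0)
        = ∑ ν ∈ Finset.range (n-k+1),
            ((-1:ℝ)^(n-k+j) / j.factorial) * ((ν.choose j) * ((n-ν-1).choose (k-1))) := by
      apply Finset.sum_congr rfl
      intro ν hν
      split_ifs with h
      · have hsgn : (-1:ℝ)^(n-k) * (-1)^ν * ((-1:ℝ)^(ν+j)) = (-1:ℝ)^(n-k+j) := by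
          rw [← pow_add, ← pow_add]
          have he : n - k + ν + (ν + j) = 2*ν + (n-k+j) := by ring
          rw [he, pow_add, pow_mul]
          norm_num
        linear_combination (((n-ν-1).choose (k-1) : ℝ) * (ν.choose j : ℝ) / (j.factorial : ℝ)) * hsgn
      · have : ν.choose j = 0 := Nat.choose_eq_zero_of_lt (by omega)
        simp [this]
    rw [hRHS, ← Finset.mul_sum]
    have hv : ∑ i ∈ Finset.range (n-k+1), (i.choose j : ℝ) * (((n-i-1).choose (k-1)) : ℝ)
        = (n.choose (j+k) : ℝ) := by
      exact_mod_cast congrArg (fun x : ℕ => (x:ℝ)) (vander n k j hk1 hkn)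
    rw [hv]
    -- LHS
    have hd : ((j+k).descFactorial k : ℝ) = (j+k).factorial / j.factorial := by
      rw [Nat.descFactorial_eq_div (by omega : k ≤ j + k)]
      have e : j + k - k = j := by omega
      rw [e, Nat.cast_div_charZero (Nat.factorial_dvd_factorial (by omega : j ≤ j + k))]
    rw [nsmul_eq_mul, hd]
    have hsgn2 : (-1:ℝ)^(n+(j+k)) = (-1:ℝ)^(n-k+j) := by
      have : n + (j+k) = 2*k + (n-k+j) := by omega
      rw [this, pow_add, pow_mul]
      simp
    rw [hsgn2]
    have hfj : (j.factorial : ℝ) ≠ 0 := by positivity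
    have hfjk : ((j+k).factorial : ℝ) ≠ 0 := by positivity
    field_simp
  · -- degenerate case
    rw [if_neg (by omega : ¬ j + k ≤ n), smul_zero]
    symm
    apply Finset.sum_eq_zero
    intro ν hν
    simp only [Finset.mem_range] at hν
    rw [if_neg (by omega : ¬ j ≤ ν), mul_zero]
open Finset Polynomial MeasureTheory Set

lemma intPow (r : ℕ) :
    IntegrableOn (fun t : ℝ => t ^ r * Real.exp (-t)) (Set.Ioi 0) := by
  have h := Real.GammaIntegral_convergent (show (0:ℝ) < r + 1 by positivity)
  refine (h.congr_fun (fun x hx => ?_) measurableSet_Ioi)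
  have hx' : (0:ℝ) < x := hx
  rw [add_sub_cancel_right]
  beta_reduce
  rw [Real.rpow_natCast]
  ring

lemma momInt (r : ℕ) :
    ∫ t in Set.Ioi (0:ℝ), t ^ r * Real.exp (-t) = r.factorial := by
  have h := Real.Gamma_eq_integral (show (0:ℝ) < r + 1 by positivity)
  have h2 : Real.Gamma ((r:ℝ)+1) = r.factorial := Real.Gamma_nat_eq_factorial r
  rw [← h2, h]
  refine setIntegral_congr_fun measurableSet_Ioi fun x hx => ?_
  have hx' : (0:ℝ) < x := hx
  rw [add_sub_cancel_right, Real.rpow_natCast]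
  ring

lemma intPoly (R : Polynomial ℝ) :
    IntegrableOn (fun t : ℝ => R.eval t * Real.exp (-t)) (Set.Ioi 0) := by
  have : (fun t : ℝ => R.eval t * Real.exp (-t))
      = fun t : ℝ => ∑ i ∈ Finset.range (R.natDegree + 1),
          R.coeff i * (t ^ i * Real.exp (-t)) := by
    funext t
    rw [Polynomial.eval_eq_sum_range, Finset.sum_mul]
    simp [mul_assoc]
  rw [this]
  exact integrable_finset_sum _ (fun i _ => (intPow i).const_mul _)

lemma Bsum (P : Polynomial ℝ) (s : Finset ℕ) (a : ℕ → ℝ) (Q : ℕ → Polynomial ℝ) :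
    ∫ t in Set.Ioi (0:ℝ), P.eval t * (∑ j ∈ s, a j • Q j).eval t * Real.exp (-t)
      = ∑ j ∈ s, a j * ∫ t in Set.Ioi (0:ℝ), P.eval t * (Q j).eval t * Real.exp (-t) := by
  have h1 : (fun t : ℝ => P.eval t * (∑ j ∈ s, a j • Q j).eval t * Real.exp (-t))
      = fun t : ℝ => ∑ j ∈ s, a j * ((P * Q j).eval t * Real.exp (-t)) := by
    funext t
    rw [Polynomial.eval_finset_sum, Finset.mul_sum, Finset.sum_mul]
    apply Finset.sum_congr rfl
    intro j _
    simp only [Polynomial.eval_smul, Polynomial.eval_mul, smul_eq_mul]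
    ring
  rw [h1, integral_finset_sum _ (fun j _ => ((intPoly (P * Q j)).const_mul _))]
  apply Finset.sum_congr rfl
  intro j _
  rw [MeasureTheory.integral_const_mul]
  congr 1
  refine setIntegral_congr_fun measurableSet_Ioi fun x hx => ?_
  simp [Polynomial.eval_mul]

lemma Bsub (P Q R : Polynomial ℝ) :
    ∫ t in Set.Ioi (0:ℝ), P.eval t * (Q - R).eval t * Real.exp (-t)
      = (∫ t in Set.Ioi (0:ℝ), P.eval t * Q.eval t * Real.exp (-t))
        - ∫ t in Set.Ioi (0:ℝ), P.eval t * R.eval t * Real.exp (-t) := by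
  have h1 : (fun t : ℝ => P.eval t * (Q - R).eval t * Real.exp (-t))
      = fun t : ℝ => (P * Q).eval t * Real.exp (-t) - (P * R).eval t * Real.exp (-t) := by
    funext t
    simp only [Polynomial.eval_sub, Polynomial.eval_mul]
    ring
  rw [h1, MeasureTheory.integral_sub (intPoly (P*Q)) (intPoly (P*R))]
  congr 1 <;>
  · refine setIntegral_congr_fun measurableSet_Ioi fun x hx => ?_
    simp [Polynomial.eval_mul]

lemma Bsymm (P Q : Polynomial ℝ) :
    ∫ t in Set.Ioi (0:ℝ), P.eval t * Q.eval t * Real.exp (-t)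
      = ∫ t in Set.Ioi (0:ℝ), Q.eval t * P.eval t * Real.exp (-t) := by
  refine setIntegral_congr_fun measurableSet_Ioi fun x hx => ?_
  ring
open Finset Polynomial MeasureTheory Set

lemma momP (n r : ℕ) :
    ∫ t in Set.Ioi (0:ℝ), (pL n).eval t * ((Polynomial.X:Polynomial ℝ)^r).eval t * Real.exp (-t)
      = (r.factorial : ℝ) * (r.choose n) := by
  have h1 : (fun t:ℝ => (pL n).eval t * ((Polynomial.X:Polynomial ℝ)^r).eval t * Real.exp (-t))
      = fun t:ℝ => ∑ i ∈ Finset.range (n+1), ((pL n).coeff i) * (t^(i+r) * Real.exp (-t)) := by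
    funext t
    rw [Polynomial.eval_eq_sum_range' (show (pL n).natDegree < n+1 by rw [pL_natDegree]; omega)]
    rw [Finset.sum_mul, Finset.sum_mul]
    refine Finset.sum_congr rfl fun i _ => ?_
    simp only [Polynomial.eval_pow, Polynomial.eval_X, pow_add]
    ring
  rw [h1, integral_finset_sum _ (fun i _ => (intPow (i+r)).const_mul _)]
  simp_rw [MeasureTheory.integral_const_mul, momInt]
  have h2 : ∀ i ∈ Finset.range (n+1), (pL n).coeff i * ((i+r).factorial : ℝ)
      = ((r.factorial : ℝ) * (-1:ℝ)^n) * ((-1:ℝ)^i * (n.choose i) * (((r+i).choose r : ℕ) : ℝ)) := by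
    intro i hi
    simp only [Finset.mem_range] at hi
    rw [pL_coeff, if_pos (by omega : i ≤ n)]
    have hf : ((i+r).factorial : ℝ) = (((r+i).choose r : ℕ) : ℝ) * r.factorial * i.factorial := by
      have h := Nat.choose_mul_factorial_mul_factorial (show r ≤ i+r by omega)
      simp only [Nat.add_sub_cancel] at h
      have e : (i+r).choose r = (r+i).choose r := by rw [add_comm]
      rw [e] at h
      exact_mod_cast h.symm
    rw [hf, pow_add]
    have hfi : (i.factorial : ℝ) ≠ 0 := by positivity
    field_simp
  rw [Finset.sum_congr rfl h2, ← Finset.mul_sum]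
  have h3 : ∑ i ∈ Finset.range (n+1), (-1:ℝ)^i * (n.choose i) * (((r+i).choose r : ℕ) : ℝ)
      = (-1:ℝ)^n * (r.choose n) := by
    exact_mod_cast congrArg (fun z : ℤ => (z:ℝ)) (intS n r)
  rw [h3]
  have h4 : ((-1:ℝ)^n)*((-1:ℝ)^n) = 1 := by
    rw [← pow_add, ← two_mul, pow_mul]
    norm_num
  linear_combination ((r.factorial:ℝ) * (r.choose n)) * h4

lemma Bpoly_zero (n : ℕ) (q : Polynomial ℝ) (hq : ∀ i, n ≤ i → q.coeff i = 0) :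
    ∫ t in Set.Ioi (0:ℝ), (pL n).eval t * q.eval t * Real.exp (-t) = 0 := by
  have hrep : q = ∑ r ∈ Finset.range (q.natDegree + 1), (q.coeff r) • (Polynomial.X:Polynomial ℝ)^r := by
    conv_lhs => rw [Polynomial.as_sum_range' q (q.natDegree+1) (lt_add_one _)]
    exact Finset.sum_congr rfl fun i _ => (Polynomial.smul_X_eq_monomial).symm
  calc ∫ t in Set.Ioi (0:ℝ), (pL n).eval t * q.eval t * Real.exp (-t)
      = ∑ r ∈ Finset.range (q.natDegree + 1), (q.coeff r) *
          ∫ t in Set.Ioi (0:ℝ), (pL n).eval t * ((Polynomial.X:Polynomial ℝ)^r).eval t * Real.exp (-t) := by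
        rw [← Bsum]; rw [← hrep]
    _ = 0 := by
        apply Finset.sum_eq_zero
        intro r _
        by_cases h : q.coeff r = 0
        · rw [h, zero_mul]
        · have hr : r < n := by
            by_contra hr'
            exact h (hq r (by omega))
          rw [momP, Nat.choose_eq_zero_of_lt hr]
          simp

lemma normP (n : ℕ) :
    ∫ t in Set.Ioi (0:ℝ), (pL n).eval t * (pL n).eval t * Real.exp (-t) = 1 := by
  have hrep : pL n = ∑ r ∈ Finset.range (n + 1), ((pL n).coeff r) • (Polynomial.X:Polynomial ℝ)^r := by
    conv_lhs => rw [Polynomial.as_sum_range' (pL n) (n+1) (by rw [pL_natDegree]; omega)]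
    exact Finset.sum_congr rfl fun i _ => (Polynomial.smul_X_eq_monomial).symm
  calc ∫ t in Set.Ioi (0:ℝ), (pL n).eval t * (pL n).eval t * Real.exp (-t)
      = ∑ r ∈ Finset.range (n + 1), ((pL n).coeff r) *
          ∫ t in Set.Ioi (0:ℝ), (pL n).eval t * ((Polynomial.X:Polynomial ℝ)^r).eval t * Real.exp (-t) := by
        rw [← Bsum, ← hrep]
    _ = 1 := by
        rw [Finset.sum_range_succ]
        have hz : ∀ r ∈ Finset.range n, ((pL n).coeff r) *
            ∫ t in Set.Ioi (0:ℝ), (pL n).eval t * ((Polynomial.X:Polynomial ℝ)^r).eval t * Real.exp (-t) = 0 := by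
          intro r hr
          simp only [Finset.mem_range] at hr
          rw [momP, Nat.choose_eq_zero_of_lt hr]
          simp
        rw [Finset.sum_congr rfl hz, Finset.sum_const_zero, zero_add]
        rw [momP, Nat.choose_self, pL_coeff_self]
        have : (n.factorial : ℝ) ≠ 0 := by positivity
        field_simp
        norm_num
open Finset Polynomial MeasureTheory Set

lemma Bsmul (P Q : Polynomial ℝ) (c : ℝ) :
    ∫ t in Set.Ioi (0:ℝ), P.eval t * (c • Q).eval t * Real.exp (-t)
      = c * ∫ t in Set.Ioi (0:ℝ), P.eval t * Q.eval t * Real.exp (-t) := by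
  have h1 : (fun t:ℝ => P.eval t * (c • Q).eval t * Real.exp (-t))
      = fun t => c * ((P*Q).eval t * Real.exp (-t)) := by
    funext t
    simp only [Polynomial.eval_smul, Polynomial.eval_mul, smul_eq_mul]
    ring
  rw [h1, MeasureTheory.integral_const_mul]
  congr 1
  refine setIntegral_congr_fun measurableSet_Ioi fun x hx => ?_
  simp [Polynomial.eval_mul]

lemma spanL (l : ℕ → Polynomial ℝ) (hdeg : ∀ m, (l m).natDegree = m)
    (hlead : ∀ m, 0 < (l m).leadingCoeff) :
    ∀ d (q : Polynomial ℝ), (∀ i, d ≤ i → q.coeff i = 0) →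
      ∃ a : ℕ → ℝ, q = ∑ j ∈ Finset.range d, a j • l j := by
  intro d
  induction d with
  | zero =>
    intro q hq
    refine ⟨fun _ => 0, ?_⟩
    rw [Finset.range_zero, Finset.sum_empty]
    ext i
    simp [hq i (Nat.zero_le i)]
  | succ d ih =>
    intro q hq
    have hld : (l d).coeff d ≠ 0 := by
      have := hlead d
      rw [Polynomial.leadingCoeff, hdeg d] at this
      exact ne_of_gt this
    set b := q.coeff d / (l d).coeff d with hb
    have hcoef : ∀ i, d ≤ i → (q - b • l d).coeff i = 0 := by
      intro i hi
      rcases eq_or_lt_of_le hi with rfl | hlt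
      · rw [Polynomial.coeff_sub, Polynomial.coeff_smul, hb, smul_eq_mul]
        field_simp
        ring
      · rw [Polynomial.coeff_sub, Polynomial.coeff_smul, hq i (by omega),
          Polynomial.coeff_eq_zero_of_natDegree_lt (by rw [hdeg]; omega)]
        simp
    obtain ⟨a, ha⟩ := ih (q - b • l d) hcoef
    refine ⟨Function.update a d b, ?_⟩
    rw [Finset.sum_range_succ, Function.update_self,
      Finset.sum_congr rfl (fun j hj => by
        rw [Function.update_of_ne (by simp only [Finset.mem_range] at hj; omega : j ≠ d)])]
    rw [← ha]
    ring

lemma uniqL (l : ℕ → Polynomial ℝ) (hdeg : ∀ m, (l m).natDegree = m)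
    (hlead : ∀ m, 0 < (l m).leadingCoeff)
    (horth : ∀ m j, ∫ t in Set.Ioi (0 : ℝ),
        (l m).eval t * (l j).eval t * Real.exp (-t) = if m = j then 1 else 0)
    (n : ℕ) : l n = pL n := by
  have hfac : (0:ℝ) < n.factorial := by positivity
  set c := (n.factorial : ℝ) * (l n).leadingCoeff with hc
  have hc0 : 0 < c := mul_pos hfac (hlead n)
  set q := l n - c • pL n with hqdef
  have hqc : ∀ i, n ≤ i → q.coeff i = 0 := by
    intro i hi
    rcases eq_or_lt_of_le hi with rfl | hlt
    · rw [hqdef, Polynomial.coeff_sub, Polynomial.coeff_smul, pL_coeff_self, smul_eq_mul, hc]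
      have hl : (l n).coeff n = (l n).leadingCoeff := by
        rw [Polynomial.leadingCoeff, hdeg]
      rw [hl]
      field_simp
      ring
    · rw [hqdef, Polynomial.coeff_sub, Polynomial.coeff_smul,
        Polynomial.coeff_eq_zero_of_natDegree_lt (by rw [hdeg]; omega),
        Polynomial.coeff_eq_zero_of_natDegree_lt (by rw [pL_natDegree]; omega)]
      simp
  obtain ⟨a, ha⟩ := spanL l hdeg hlead n q hqc
  have hlowcoeff : ∀ m, m < n → (∀ i, n ≤ i → (l m).coeff i = 0) := by
    intro m hm i hi
    exact Polynomial.coeff_eq_zero_of_natDegree_lt (by rw [hdeg]; omega)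
  have hBlq : ∀ m, m < n →
      ∫ t in Set.Ioi (0:ℝ), (l m).eval t * q.eval t * Real.exp (-t) = 0 := by
    intro m hm
    rw [hqdef, Bsub, horth m n, if_neg (by omega), Bsmul,
      Bsymm (l m) (pL n), Bpoly_zero n (l m) (hlowcoeff m hm)]
    simp
  have haj : ∀ j ∈ Finset.range n, a j = 0 := by
    intro j hj
    have hj' : j < n := Finset.mem_range.mp hj
    have h := Bsum (l j) (Finset.range n) a l
    rw [← ha, hBlq j hj'] at h
    rw [Finset.sum_congr rfl (fun i _ => by rw [horth j i])] at h
    simp only [mul_ite, mul_one, mul_zero] at h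
    rw [Finset.sum_ite_eq (Finset.range n) j a, if_pos hj] at h
    exact h.symm
  have hq0 : q = 0 := by
    rw [ha]
    exact Finset.sum_eq_zero fun j hj => by rw [haj j hj, zero_smul]
  have hln : l n = c • pL n := sub_eq_zero.mp hq0
  have hcc : c * c = 1 := by
    have h := horth n n
    rw [if_pos rfl] at h
    nth_rewrite 2 [hln] at h
    rw [Bsmul, Bsymm (l n) (pL n)] at h
    rw [hln, Bsmul, normP] at h
    linarith [h]
  have hc1 : c = 1 := by nlinarith [hc0, hcc]
  rw [hln, hc1, one_smul]

theorem orthonormal_laguerre_kth_derivative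
    (l : ℕ → Polynomial ℝ)
    (hdeg : ∀ m, (l m).natDegree = m)
    (hlead : ∀ m, 0 < (l m).leadingCoeff)
    (horth : ∀ m j, ∫ t in Set.Ioi (0 : ℝ),
        (l m).eval t * (l j).eval t * Real.exp (-t) = if m = j then 1 else 0)
    (n k : ℕ) (hk1 : 1 ≤ k) (hkn : k ≤ n) :
    (Polynomial.derivative^[k]) (l n) =
      ∑ ν ∈ Finset.range (n - k + 1),
        ((-1 : ℝ) ^ (n - k) * (-1 : ℝ) ^ ν * (Nat.choose (n - ν - 1) (k - 1) : ℝ)) • l ν := by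
  have hl : ∀ m, l m = pL m := uniqL l hdeg hlead horth
  simp only [hl]
  exact pL_derivative n k hk1 hkn
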